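/- Let p ∈ ℤ[t,t⁻¹] be a Laurent polynomial with integer coefficients such that p(t) = p(t⁻¹) (p is invariant under the involution t ↦ t⁻¹) and p(1) = 0. Then there exist an integer k ≥ 1 and integers b₁, …, b_k such that p(t) = Σ_{i=1}^{k} b_i · (tⁱ − t^{i−1} − t^{−(i−1)} + t^{−i}). -/

import Mathlib

open LaurentPolynomial

namespace SymVan

noncomputable def q (i : ℕ) : LaurentPolynomial ℤ :=
  T (i : ℤ) - T ((i : ℤ) - 1) - T (-((i : ℤ) - 1)) + T (-(i : ℤ))

def Good (p : LaurentPolynomial ℤ) : Prop :=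
  ∃ k : ℕ, 1 ≤ k ∧ ∃ b : ℕ → ℤ, p = ∑ i ∈ Finset.Icc 1 k, b i • q i

noncomputable def σ : LaurentPolynomial ℤ →+* ℤ :=
  ((AddMonoidAlgebra.lift ℤ ℤ ℤ) 1).toRingHom

lemma σ_single (n : ℤ) (a : ℤ) : σ (AddMonoidAlgebra.single n a) = a := by
  show ((AddMonoidAlgebra.lift ℤ ℤ ℤ) 1) (AddMonoidAlgebra.single n a) = a
  rw [AddMonoidAlgebra.lift_single]
  simp

lemma σ_T (n : ℤ) : σ (T n) = 1 := σ_single n 1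

lemma good_zero : Good 0 :=
  ⟨1, le_refl 1, fun _ => 0, by simp⟩

lemma sum_extend {k K : ℕ} (hK : k ≤ K) (b : ℕ → ℤ) :
    ∑ i ∈ Finset.Icc 1 K, (if i ≤ k then b i else 0) • q i
      = ∑ i ∈ Finset.Icc 1 k, b i • q i := by
  rw [← Finset.sum_subset (Finset.Icc_subset_Icc_right hK)
    (fun i hi hni => ?_)]
  · apply Finset.sum_congr rfl
    intro i hi
    rw [if_pos ((Finset.mem_Icc.mp hi).2)]
  · have h1 : ¬ i ≤ k := by
      rw [Finset.mem_Icc] at hi hni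
      omega
    rw [if_neg h1, zero_smul]

lemma good_add {p₁ p₂ : LaurentPolynomial ℤ} (h₁ : Good p₁) (h₂ : Good p₂) :
    Good (p₁ + p₂) := by
  obtain ⟨k₁, hk₁, b₁, rfl⟩ := h₁
  obtain ⟨k₂, hk₂, b₂, rfl⟩ := h₂
  refine ⟨max k₁ k₂, le_trans hk₁ (le_max_left _ _),
    fun i => (if i ≤ k₁ then b₁ i else 0) + (if i ≤ k₂ then b₂ i else 0), ?_⟩
  rw [← sum_extend (le_max_left k₁ k₂) b₁, ← sum_extend (le_max_right k₁ k₂) b₂,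
    ← Finset.sum_add_distrib]
  apply Finset.sum_congr rfl
  intro i _
  rw [add_smul]

lemma good_smul (c : ℤ) {p : LaurentPolynomial ℤ} (h : Good p) : Good (c • p) := by
  obtain ⟨k, hk, b, rfl⟩ := h
  refine ⟨k, hk, fun i => c * b i, ?_⟩
  rw [Finset.smul_sum]
  apply Finset.sum_congr rfl
  intro i _
  rw [smul_smul]

lemma telescope (j : ℕ) :
    ∑ i ∈ Finset.Icc 1 j, q i = T (j : ℤ) + T (-(j : ℤ)) - (T 0 + T 0) := by
  induction j with
  | zero => simp
  | succ j ih =>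
    rw [Finset.sum_Icc_succ_top (Nat.one_le_iff_ne_zero.mpr (Nat.succ_ne_zero j)), ih]
    have h1 : ((j + 1 : ℕ) : ℤ) - 1 = (j : ℤ) := by push_cast; ring
    rw [q, h1]
    ring

lemma good_u (j : ℕ) : Good (T (j : ℤ) + T (-(j : ℤ)) - (T 0 + T 0)) := by
  refine ⟨max j 1, le_max_right _ _, fun i => if i ≤ j then 1 else 0, ?_⟩
  rw [sum_extend (le_max_left j 1) (fun _ => 1), ← telescope]
  apply Finset.sum_congr rfl
  intro i _
  rw [one_smul]

lemma coeff_u (j : ℕ) (n : ℤ) :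
    ((T (j : ℤ) + T (-(j : ℤ)) - (T 0 + T 0) : LaurentPolynomial ℤ)).coeff n
      = (if (j : ℤ) = n then 1 else 0) + (if -(j : ℤ) = n then 1 else 0)
        - ((if (0:ℤ) = n then 1 else 0) + (if (0:ℤ) = n then 1 else 0)) := by
  show ((AddMonoidAlgebra.single (j:ℤ) 1 + AddMonoidAlgebra.single (-(j:ℤ)) 1 - (AddMonoidAlgebra.single 0 1 + AddMonoidAlgebra.single 0 1) : LaurentPolynomial ℤ)).coeff n = _
  simp only [AddMonoidAlgebra.coeff_sub, AddMonoidAlgebra.coeff_add, Finsupp.sub_apply, Finsupp.add_apply, AddMonoidAlgebra.coeff_single, Finsupp.single_apply]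

lemma main (N : ℕ) : ∀ p : LaurentPolynomial ℤ, invert p = p → σ p = 0 →
    (∀ n : ℤ, N < n.natAbs → p.coeff n = 0) → Good p := by
  induction N with
  | zero =>
    intro p hsym hone hbd
    have hp : p = AddMonoidAlgebra.single 0 (p.coeff 0) := by
      ext n
      rcases eq_or_ne n 0 with rfl | hn
      · rw [AddMonoidAlgebra.coeff_single, Finsupp.single_eq_same]
      · rw [hbd n (by omega), AddMonoidAlgebra.coeff_single, Finsupp.single_apply, if_neg (Ne.symm hn)]
    have h0 : p.coeff 0 = 0 := by rw [hp, σ_single] at hone; exact hone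
    rw [hp, h0, AddMonoidAlgebra.single_zero]
    exact good_zero
  | succ N ih =>
    intro p hsym hone hbd
    set c : ℤ := p.coeff ((N : ℤ) + 1) with hc
    set u : LaurentPolynomial ℤ :=
      T (((N : ℤ) + 1)) + T (-((N : ℤ) + 1)) - (T 0 + T 0) with hu
    have hsymm_p : ∀ n : ℤ, p.coeff (-n) = p.coeff n := by
      intro n
      conv_rhs => rw [← hsym]
      rw [invert_apply]
    have hcu : ∀ n : ℤ, u.coeff n =
        (if (N : ℤ) + 1 = n then 1 else 0) + (if -((N : ℤ) + 1) = n then 1 else 0)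
        - ((if (0:ℤ) = n then 1 else 0) + (if (0:ℤ) = n then 1 else 0)) := by
      intro n
      have := coeff_u (N + 1) n
      rw [show (((N + 1 : ℕ)) : ℤ) = (N : ℤ) + 1 by push_cast; ring] at this
      exact this
    have hinv_u : invert u = u := by
      rw [hu]
      simp only [map_add, map_sub, invert_T, neg_neg]
      ring
    have hσ_u : σ u = 0 := by
      rw [hu]
      simp only [map_add, map_sub, σ_T]
      ring
    have key : Good (p - c • u) := by
      apply ih
      · rw [map_sub, hsym, map_zsmul, hinv_u]
      · rw [map_sub, hone, map_zsmul, hσ_u, smul_zero, sub_zero]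
      · intro n hn
        rw [AddMonoidAlgebra.coeff_sub, Finsupp.sub_apply, AddMonoidAlgebra.coeff_smul, Finsupp.smul_apply, hcu, smul_eq_mul]
        rcases lt_or_ge (N + 1) n.natAbs with habs | habs
        · rw [hbd n habs, if_neg (by omega), if_neg (by omega), if_neg (by omega)]
          ring
        · have : n = (N : ℤ) + 1 ∨ n = -((N : ℤ) + 1) := by omega
          rcases this with rfl | rfl
          · rw [if_pos rfl, if_neg (by omega), if_neg (by omega), ← hc]
            ring
          · rw [if_neg (by omega), if_pos rfl, if_neg (by omega),
              hsymm_p ((N : ℤ) + 1), ← hc]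
            ring
    have hpe : p = (p - c • u) + c • u := by ring
    rw [hpe]
    refine good_add key (good_smul c ?_)
    have := good_u (N + 1)
    rw [show (((N + 1 : ℕ)) : ℤ) = (N : ℤ) + 1 by push_cast; ring] at this
    exact this

end SymVan

open SymVan

/-- If `p ∈ ℤ[t,t⁻¹]` satisfies `p(t) = p(t⁻¹)` and `p(1) = 0` (where evaluation at `t = 1`
is the ring homomorphism `ε` with `ε(t) = 1`), then
`p(t) = ∑_{i=1}^{k} bᵢ (tⁱ - t^{i-1} - t^{-(i-1)} + t^{-i})` for some `k ≥ 1` and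
integers `b₁, …, b_k`. -/
theorem symmetric_vanishing_at_one_decomposition
    (p : LaurentPolynomial ℤ)
    (hsym : invert p = p)
    (hone : ∀ ε : LaurentPolynomial ℤ →+* ℤ, ε (T 1) = 1 → ε p = 0) :
    ∃ k : ℕ, 1 ≤ k ∧ ∃ b : ℕ → ℤ,
      p = ∑ i ∈ Finset.Icc 1 k,
        b i • (T (i : ℤ) - T ((i : ℤ) - 1) - T (-((i : ℤ) - 1)) + T (-(i : ℤ))) := by
  have hσ : σ p = 0 := hone σ (σ_T 1)
  have hbd : ∀ n : ℤ, (p.coeff.support.sup Int.natAbs) < n.natAbs → p.coeff n = 0 := by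
    intro n hn
    by_contra h
    have hmem : n ∈ p.coeff.support := Finsupp.mem_support_iff.mpr h
    have := Finset.le_sup (f := Int.natAbs) hmem
    omega
  exact main (p.coeff.support.sup Int.natAbs) p hsym hσ hbd
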